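/- Let R be a commutative ring with identity and S a multiplicatively closed subset of R, and assume that R is S-Noetherian (i.e., every ideal of R is S-finite). Then R is an S-Bézout ring if and only if the localization S⁻¹R is a Bézout ring. -/

import Mathlib

/-- An ideal `I` of a commutative ring `R` is `S`-principal if there exist `s ∈ S`
and `a ∈ R` such that `sI ⊆ aR ⊆ I`. -/
def Ideal.IsSPrincipal {R : Type*} [CommRing R] (S : Set R) (I : Ideal R) : Prop :=
  ∃ s ∈ S, ∃ a : R, (∀ x ∈ I, s * x ∈ Ideal.span {a}) ∧ Ideal.span {a} ≤ I

/-- A commutative ring `R` is `S`-Bézout if every finitely generated ideal of `R`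
is `S`-principal. -/
def IsSBezout (R : Type*) [CommRing R] (S : Set R) : Prop :=
  ∀ I : Ideal R, I.FG → I.IsSPrincipal S

/-- An ideal `I` of `R` is `S`-finite if there exist `s ∈ S` and a finitely
generated ideal `J` of `R` such that `sI ⊆ J ⊆ I`. -/
def Ideal.IsSFinite {R : Type*} [CommRing R] (S : Set R) (I : Ideal R) : Prop :=
  ∃ s ∈ S, ∃ J : Ideal R, J.FG ∧ (∀ x ∈ I, s * x ∈ J) ∧ J ≤ I

/-- If `s ∈ S` and `sI ⊆ J ⊆ I`, then the extensions of `I` and `J` in the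
localization agree. -/
lemma map_eq_map_of_sandwich {R : Type*} [CommRing R] (S : Submonoid R) {s : R}
    (hs : s ∈ S) {I J : Ideal R} (h1 : ∀ x ∈ I, s * x ∈ J) (h2 : J ≤ I) :
    Ideal.map (algebraMap R (Localization S)) J
      = Ideal.map (algebraMap R (Localization S)) I := by
  refine le_antisymm (Ideal.map_mono h2) ?_
  intro z hz
  obtain ⟨⟨a, t⟩, h⟩ := (IsLocalization.mem_map_algebraMap_iff S (Localization S)).1 hz
  refine (IsLocalization.mem_map_algebraMap_iff S (Localization S)).2
    ⟨⟨⟨s * a, h1 a a.2⟩, ⟨s, hs⟩ * t⟩, ?_⟩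
  simp only [Submonoid.coe_mul, map_mul]
  rw [show (algebraMap R (Localization S)) s * (algebraMap R (Localization S)) ↑t
      = (algebraMap R (Localization S)) ↑t * (algebraMap R (Localization S)) s from mul_comm _ _,
    ← mul_assoc, h, mul_comm]

/-- If `R` is `S`-Noetherian (every ideal of `R` is `S`-finite), then `R` is an
`S`-Bézout ring if and only if `S⁻¹R` is a Bézout ring. -/
theorem sBezout_iff_isBezout_localization_of_sNoetherian {R : Type*} [CommRing R]
    (S : Submonoid R) (hN : ∀ I : Ideal R, I.IsSFinite S) :
    IsSBezout R S ↔ IsBezout (Localization S) := by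
  constructor
  · intro hB
    refine ⟨fun J hJ => ?_⟩
    set I := J.comap (algebraMap R (Localization S)) with hI
    have hmap : Ideal.map (algebraMap R (Localization S)) I = J :=
      IsLocalization.map_comap S (Localization S) J
    obtain ⟨s, hs, J', hJ'fg, hsub, hle⟩ := hN I
    obtain ⟨t, ht, a, hta, haJ'⟩ := hB J' hJ'fg
    have e1 : Ideal.map (algebraMap R (Localization S)) J'
        = Ideal.map (algebraMap R (Localization S)) I :=
      map_eq_map_of_sandwich S hs hsub hle
    have e2 : Ideal.map (algebraMap R (Localization S)) (Ideal.span {a})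
        = Ideal.map (algebraMap R (Localization S)) J' :=
      map_eq_map_of_sandwich S ht hta haJ'
    refine ⟨⟨algebraMap R (Localization S) a, ?_⟩⟩
    rw [← hmap, ← e1, ← e2, Ideal.map_span, Set.image_singleton]
  · intro hB I hIfg
    have hmfg : (Ideal.map (algebraMap R (Localization S)) I).FG := hIfg.map _
    obtain ⟨g, hg⟩ := (IsBezout.isPrincipal_of_FG _ hmfg).1
    -- g ∈ map I, so g * (t:loc) = algebraMap a with a ∈ I
    have hgmem : g ∈ Ideal.map (algebraMap R (Localization S)) I := by
      rw [hg]; exact Ideal.subset_span rfl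
    obtain ⟨⟨a, t⟩, hat⟩ := (IsLocalization.mem_map_algebraMap_iff S (Localization S)).1 hgmem
    -- span {algebraMap a} = span {g}
    have hspan : Ideal.span {algebraMap R (Localization S) (a : R)}
        = Ideal.span {g} := by
      apply le_antisymm
      · rw [Ideal.span_singleton_le_span_singleton]
        exact ⟨algebraMap R (Localization S) (t : R), hat.symm⟩
      · rw [Ideal.span_singleton_le_span_singleton]
        obtain ⟨u, hu⟩ := IsLocalization.map_units (Localization S) t
        exact ⟨(↑u⁻¹ : Localization S), by
          rw [← hu] at hat
          rw [← hat, mul_assoc, Units.mul_inv, mul_one]⟩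
    -- For each x ∈ I, some s ∈ S with s * x ∈ span {a}
    have key : ∀ x ∈ I, ∃ s ∈ S, s * x ∈ Ideal.span {(a : R)} := by
      intro x hx
      have : algebraMap R (Localization S) x
          ∈ Ideal.map (algebraMap R (Localization S)) (Ideal.span {(a : R)}) := by
        rw [Ideal.map_span, Set.image_singleton]
        show _ ∈ Ideal.span {algebraMap R (Localization S) (a : R)}
        rw [hspan]
        show _ ∈ Submodule.span (Localization S) {g}
        rw [← hg]
        exact Ideal.mem_map_of_mem _ hx
      rw [show algebraMap R (Localization S) x
          = IsLocalization.mk' (Localization S) x (1 : S) by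
            rw [IsLocalization.mk'_one]] at this
      exact (IsLocalization.mk'_mem_map_algebraMap_iff S (Localization S) _ x 1).1 this
    classical
    obtain ⟨T, hT⟩ := hIfg
    choose! c hcS hc using key
    refine ⟨∏ i ∈ T, c i, Submonoid.prod_mem S fun i hi => hcS i (hT ▸ Ideal.subset_span hi),
      a, ?_, by rw [Ideal.span_singleton_le_iff_mem]; exact a.2⟩
    intro x hx
    rw [← hT] at hx
    refine Submodule.span_induction ?_ ?_ ?_ ?_ hx
    · intro y hy
      have : (∏ i ∈ T, c i) * y = (∏ i ∈ T.erase y, c i) * (c y * y) := by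
        rw [← mul_assoc, ← Finset.prod_erase_mul T c hy]
      rw [this]
      exact Ideal.mul_mem_left _ _ (hc y (hT ▸ Ideal.subset_span hy))
    · simp
    · intro y z _ _ hy hz
      rw [mul_add]; exact Ideal.add_mem _ hy hz
    · intro r y _ hy
      rw [smul_eq_mul, mul_left_comm]
      exact Ideal.mul_mem_left _ _ hy
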